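/- For positive integers z_2, z_3 with z_2 ≥ 2, the partial sum S_3 = 1 + 1/z_2 + 1/(z_2^2 z_3) equals the value of the finite continued fraction [1; z_2 - 1, 1, z_3 - 1, z_2], i.e. S_3 = (z_2^2 z_3 + z_2 z_3 + 1)/(z_2^2 z_3). -/

import Mathlib

/-- Value of a finite continued fraction `[a₀; a₁, …, aₙ]` given as a list. -/
noncomputable def cf : List ℝ → ℝ
  | [] => 0
  | a :: l => a + 1 / cf l

theorem stmt3 (z2 z3 : ℕ) (h2 : 2 ≤ z2) (h3 : 1 ≤ z3) :
    1 + 1 / (z2 : ℝ) + 1 / ((z2 : ℝ) ^ 2 * z3)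
      = cf [1, (z2 : ℝ) - 1, 1, (z3 : ℝ) - 1, (z2 : ℝ)] ∧
    1 + 1 / (z2 : ℝ) + 1 / ((z2 : ℝ) ^ 2 * z3)
      = ((z2 : ℝ) ^ 2 * z3 + (z2 : ℝ) * z3 + 1) / ((z2 : ℝ) ^ 2 * z3) := by
  have hz2 : (2:ℝ) ≤ (z2:ℝ) := by exact_mod_cast h2
  have hz3 : (1:ℝ) ≤ (z3:ℝ) := by exact_mod_cast h3
  have h20 : (z2:ℝ) ≠ 0 := by linarith
  have h30 : (z3:ℝ) ≠ 0 := by linarith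
  have hA : (0:ℝ) < z2*z3 - z2 + 1 := by nlinarith
  have hB : (0:ℝ) < z2*z3 + 1 := by nlinarith
  have hA' : (z2:ℝ)*z3 - z2 + 1 ≠ 0 := by linarith
  have hB' : (z2:ℝ)*z3 + 1 ≠ 0 := by linarith
  have e1 : cf [(z2:ℝ)] = z2 := by simp [cf]
  have e2 : cf [(z3:ℝ)-1, (z2:ℝ)] = ((z2:ℝ)*z3 - z2 + 1)/z2 := by
    simp only [cf, e1]; field_simp; ring
  have e3 : cf [1, (z3:ℝ)-1, (z2:ℝ)] = ((z2:ℝ)*z3 + 1)/((z2:ℝ)*z3 - z2 + 1) := by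
    rw [show cf [1, (z3:ℝ)-1, (z2:ℝ)] = 1 + 1 / cf [(z3:ℝ)-1, (z2:ℝ)] from rfl, e2,
      one_div_div]
    rw [one_add_div hA']
    ring
  have e4 : cf [(z2:ℝ)-1, 1, (z3:ℝ)-1, (z2:ℝ)] = ((z2:ℝ)^2*z3)/((z2:ℝ)*z3 + 1) := by
    rw [show cf [(z2:ℝ)-1, 1, (z3:ℝ)-1, (z2:ℝ)]
        = ((z2:ℝ)-1) + 1 / cf [1, (z3:ℝ)-1, (z2:ℝ)] from rfl, e3,
      one_div_div]
    field_simp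
    ring
  have e5 : cf [1, (z2:ℝ)-1, 1, (z3:ℝ)-1, (z2:ℝ)] = 1 + ((z2:ℝ)*z3 + 1)/((z2:ℝ)^2*z3) := by
    rw [show cf [1, (z2:ℝ)-1, 1, (z3:ℝ)-1, (z2:ℝ)]
        = 1 + 1 / cf [(z2:ℝ)-1, 1, (z3:ℝ)-1, (z2:ℝ)] from rfl, e4, one_div_div]
  constructor
  · rw [e5]; field_simp; ring
  · field_simp
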